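/- Let (Ξ, d_Ξ) be a Polish space (complete separable metric space) and let (C, d_C) be a compact metric space. Let J : Ξ × C → ℝ be lower semi-continuous (jointly, with respect to the product topology), and assume that for every c ∈ C the map ξ ↦ J(ξ, c) is continuous on Ξ. Then there exists a Borel measurable map c* : Ξ → C such that J(ξ, c*(ξ)) = min_{c ∈ C} J(ξ, c) for all ξ ∈ Ξ. -/

import Mathlib

open Filter Metric Set Topology

namespace MeasArgminAux

variable {C : Type*} [MetricSpace C] [CompactSpace C] [Nonempty C]

noncomputable def rr (k : ℕ) : ℝ := (1 / 2 : ℝ) ^ k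

lemma rr_pos (k : ℕ) : 0 < rr k := pow_pos (by norm_num) k

lemma rr_tendsto : Tendsto rr atTop (𝓝 0) :=
  tendsto_pow_atTop_nhds_zero_of_lt_one (by norm_num) (by norm_num)

noncomputable def ee : ℕ → C := TopologicalSpace.denseSeq C

lemma ee_dense : DenseRange (ee : ℕ → C) := TopologicalSpace.denseRange_denseSeq C

/-- Intersection of closed balls around the dense sequence indexed by a list. -/
noncomputable def Ball (s : List ℕ) : Set C :=
  ⋂ j ∈ Finset.range s.length, closedBall (ee (s.getD j 0)) (rr j)

lemma Ball_closed (s : List ℕ) : IsClosed (Ball (C := C) s) :=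
  isClosed_biInter fun j _ => isClosed_closedBall

lemma Ball_nil : Ball (C := C) [] = univ := by
  simp [Ball]

variable {Ξ : Type*} (A : Ξ → Set C)

noncomputable def step (ξ : Ξ) (s : List ℕ) : ℕ :=
  sInf {n | (A ξ ∩ Ball (s ++ [n])).Nonempty}

noncomputable def LL (ξ : Ξ) : ℕ → List ℕ
  | 0 => []
  | k + 1 => LL ξ k ++ [step A ξ (LL ξ k)]

lemma LL_zero (ξ : Ξ) : LL A ξ 0 = [] := rfl

lemma LL_succ (ξ : Ξ) (k : ℕ) : LL A ξ (k + 1) = LL A ξ k ++ [step A ξ (LL A ξ k)] := rfl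

lemma LL_length (ξ : Ξ) (k : ℕ) : (LL A ξ k).length = k := by
  induction k with
  | zero => rfl
  | succ k ih => simp [LL_succ, ih]

/-- If a list scheme is compatible, it can be extended. -/
lemma exists_ext (ξ : Ξ) (s : List ℕ) (h : (A ξ ∩ Ball s).Nonempty) :
    ∃ n, (A ξ ∩ Ball (s ++ [n])).Nonempty := by
  obtain ⟨x, hxA, hxB⟩ := h
  obtain ⟨n, hn⟩ := ee_dense.exists_dist_lt x (rr_pos s.length)
  refine ⟨n, x, hxA, ?_⟩
  simp only [Ball, mem_iInter, Finset.mem_range, List.length_append, List.length_cons,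
    List.length_nil] at hxB ⊢
  intro j hj
  rcases lt_or_eq_of_le (Nat.lt_succ_iff.mp hj) with hj' | hj'
  · rw [List.getD_append _ _ _ _ hj']
    exact hxB j hj'
  · subst hj'
    rw [List.getD_append_right _ _ _ _ le_rfl, Nat.sub_self]
    simpa [mem_closedBall, dist_comm] using hn.le

lemma step_spec (ξ : Ξ) (s : List ℕ) (h : (A ξ ∩ Ball s).Nonempty) :
    (A ξ ∩ Ball (s ++ [step A ξ s])).Nonempty :=
  Nat.sInf_mem (exists_ext A ξ s h)

lemma LL_spec (ξ : Ξ) (hne : (A ξ).Nonempty) (k : ℕ) : (A ξ ∩ Ball (LL A ξ k)).Nonempty := by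
  induction k with
  | zero => simpa [LL_zero, Ball_nil] using hne
  | succ k ih => rw [LL_succ]; exact step_spec A ξ _ ih

lemma LL_getD (ξ : Ξ) (k j : ℕ) (hj : j < k) :
    (LL A ξ k).getD j 0 = step A ξ (LL A ξ j) := by
  induction k with
  | zero => exact absurd hj (Nat.not_lt_zero j)
  | succ k ih =>
    rw [LL_succ]
    rcases lt_or_eq_of_le (Nat.lt_succ_iff.mp hj) with hj' | hj'
    · rw [List.getD_append _ _ _ _ (by rw [LL_length]; exact hj')]
      exact ih hj'
    · subst hj'
      rw [List.getD_append_right _ _ _ _ (by rw [LL_length]), LL_length, Nat.sub_self]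
      rfl

end MeasArgminAux

open MeasArgminAux

/-- General measurable selection for nonempty closed-valued maps whose hitting sets
of closed sets are measurable. -/
theorem exists_measurable_selection_aux
    {Ξ : Type*} [MeasurableSpace Ξ]
    {C : Type*} [MetricSpace C] [CompactSpace C] [Nonempty C]
    [MeasurableSpace C] [BorelSpace C]
    (A : Ξ → Set C) (hne : ∀ ξ, (A ξ).Nonempty) (hcl : ∀ ξ, IsClosed (A ξ))
    (hmeas : ∀ K : Set C, IsClosed K → MeasurableSet {ξ | (A ξ ∩ K).Nonempty}) :
    ∃ f : Ξ → C, Measurable f ∧ ∀ ξ, f ξ ∈ A ξ := by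
  classical
  -- pick points in the scheme
  have hx : ∀ ξ k, (A ξ ∩ Ball (LL A ξ k)).Nonempty := fun ξ k => LL_spec A ξ (hne ξ) k
  choose x hxA hxB using hx
  -- distance control
  have hdx : ∀ ξ k j, j < k → dist (x ξ k) (ee (step A ξ (LL A ξ j))) ≤ rr j := by
    intro ξ k j hj
    have := hxB ξ k
    simp only [Ball, mem_iInter, Finset.mem_range, LL_length] at this
    have h2 := this j hj
    rwa [LL_getD A ξ k j hj] at h2
  -- Cauchy
  have hcauchy : ∀ ξ, CauchySeq (fun k => x ξ (k + 1)) := by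
    intro ξ
    refine cauchySeq_of_le_tendsto_0 (fun N => 2 * rr N) ?_ ?_
    · intro n m N hn hm
      calc dist (x ξ (n + 1)) (x ξ (m + 1))
          ≤ dist (x ξ (n + 1)) (ee (step A ξ (LL A ξ N)))
            + dist (x ξ (m + 1)) (ee (step A ξ (LL A ξ N))) := dist_triangle_right _ _ _
        _ ≤ rr N + rr N := add_le_add (hdx ξ (n + 1) N (by omega)) (hdx ξ (m + 1) N (by omega))
        _ = 2 * rr N := by ring
    · simpa using rr_tendsto.const_mul 2
  have hconv : ∀ ξ, ∃ c : C, Tendsto (fun k => x ξ (k + 1)) atTop (𝓝 c) := fun ξ =>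
    cauchySeq_tendsto_of_complete (hcauchy ξ)
  choose f hf using hconv
  have hfA : ∀ ξ, f ξ ∈ A ξ := fun ξ =>
    (hcl ξ).mem_of_tendsto (hf ξ) (Eventually.of_forall fun k => hxA ξ (k + 1))
  -- the dense-sequence approximations also converge to f
  have hfe : ∀ ξ, Tendsto (fun k => ee (step A ξ (LL A ξ k)) : ℕ → C) atTop (𝓝 (f ξ)) := by
    intro ξ
    apply (hf ξ).congr_dist
    refine squeeze_zero (fun k => dist_nonneg) (fun k => ?_) rr_tendsto
    exact hdx ξ (k + 1) k (by omega)
  -- measurability of step at a fixed list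
  have hstep_pre : ∀ (s : List ℕ) (y : ℕ), MeasurableSet {ξ | step A ξ s = y} := by
    intro s y
    have hP : ∀ n, MeasurableSet {ξ | (A ξ ∩ Ball (s ++ [n])).Nonempty} := fun n =>
      hmeas _ (Ball_closed _)
    match y with
    | 0 =>
      have : {ξ | step A ξ s = 0}
          = {ξ | (A ξ ∩ Ball (s ++ [0])).Nonempty}
            ∪ ⋂ m, {ξ | (A ξ ∩ Ball (s ++ [m])).Nonempty}ᶜ := by
        ext ξ
        simp only [mem_setOf_eq, mem_union, mem_iInter, mem_compl_iff, step, Nat.sInf_eq_zero]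
        constructor
        · rintro (h | h)
          · exact Or.inl h
          · exact Or.inr fun m hm => eq_empty_iff_forall_notMem.1 h m hm
        · rintro (h | h)
          · exact Or.inl h
          · exact Or.inr (eq_empty_iff_forall_notMem.2 h)
      rw [this]
      exact (hP 0).union (MeasurableSet.iInter fun m => (hP m).compl)
    | y + 1 =>
      have : {ξ | step A ξ s = y + 1}
          = {ξ | (A ξ ∩ Ball (s ++ [y + 1])).Nonempty}
            ∩ ⋂ m ∈ Finset.range (y + 1), {ξ | (A ξ ∩ Ball (s ++ [m])).Nonempty}ᶜ := by
        ext ξ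
        simp only [mem_setOf_eq, mem_inter_iff, mem_iInter, mem_compl_iff, Finset.mem_range, step]
        constructor
        · intro h
          have hne' : {n | (A ξ ∩ Ball (s ++ [n])).Nonempty}.Nonempty := by
            by_contra hC
            rw [not_nonempty_iff_eq_empty] at hC
            rw [hC] at h
            simp [Nat.sInf_empty] at h
          constructor
          · have := Nat.sInf_mem hne'
            rwa [h] at this
          · intro m hm
            exact Nat.notMem_of_lt_sInf (h ▸ hm)
        · rintro ⟨h1, h2⟩
          have hle : sInf {n | (A ξ ∩ Ball (s ++ [n])).Nonempty} ≤ y + 1 := Nat.sInf_le h1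
          have hge : y + 1 ≤ sInf {n | (A ξ ∩ Ball (s ++ [n])).Nonempty} := by
            by_contra hC
            push_neg at hC
            have hmem := Nat.sInf_mem (⟨y + 1, h1⟩ :
              Set.Nonempty {n | (A ξ ∩ Ball (s ++ [n])).Nonempty})
            exact h2 _ hC hmem
          omega
      rw [this]
      exact (hP (y + 1)).inter
        (MeasurableSet.biInter (Finset.range (y + 1)).countable_toSet fun m _ => (hP m).compl)
  -- measurability of LL
  have hLL_pre : ∀ (k : ℕ) (s : List ℕ), MeasurableSet {ξ | LL A ξ k = s} := by
    intro k
    induction k with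
    | zero =>
      intro s
      by_cases h : s = ([] : List ℕ)
      · have : {ξ | LL A ξ 0 = s} = univ := by
          ext ξ; simp [LL_zero, h]
        rw [this]; exact MeasurableSet.univ
      · have : {ξ | LL A ξ 0 = s} = ∅ := by
          ext ξ; simp only [mem_setOf_eq, mem_empty_iff_false, iff_false, LL_zero]
          exact fun hC => h hC.symm
        rw [this]; exact MeasurableSet.empty
    | succ k ih =>
      intro s
      have : {ξ | LL A ξ (k + 1) = s}
          = ⋃ t : List ℕ, ⋃ n : ℕ,
              if t ++ [n] = s then {ξ | LL A ξ k = t} ∩ {ξ | step A ξ t = n} else ∅ := by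
        ext ξ
        simp only [mem_setOf_eq, mem_iUnion]
        constructor
        · intro h
          rw [LL_succ] at h
          refine ⟨LL A ξ k, step A ξ (LL A ξ k), ?_⟩
          rw [if_pos h]
          exact ⟨rfl, rfl⟩
        · rintro ⟨t, n, h⟩
          split_ifs at h with hc
          · obtain ⟨h1, h2⟩ := h
            rw [LL_succ, h1, h2, hc]
          · exact absurd h (notMem_empty ξ)
      rw [this]
      refine MeasurableSet.iUnion fun t => MeasurableSet.iUnion fun n => ?_
      split_ifs
      · exact (ih t).inter (hstep_pre t n)
      · exact MeasurableSet.empty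
  -- measurability of the approximations
  have happrox : ∀ k, Measurable fun ξ => (ee (step A ξ (LL A ξ k)) : C) := by
    intro k
    refine measurable_from_nat.comp (measurable_to_countable' fun y => ?_)
    have : (fun ξ => step A ξ (LL A ξ k)) ⁻¹' {y}
        = ⋃ t : List ℕ, {ξ | LL A ξ k = t} ∩ {ξ | step A ξ t = y} := by
      ext ξ
      simp only [mem_preimage, mem_singleton_iff, mem_iUnion, mem_inter_iff, mem_setOf_eq]
      constructor
      · intro h; exact ⟨LL A ξ k, rfl, h⟩
      · rintro ⟨t, h1, h2⟩; rw [h1]; exact h2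
    rw [this]
    exact MeasurableSet.iUnion fun t => (hLL_pre k t).inter (hstep_pre t y)
  refine ⟨f, ?_, hfA⟩
  exact measurable_of_tendsto_metrizable (f := fun k ξ => ee (step A ξ (LL A ξ k))) happrox (tendsto_pi_nhds.2 hfe)

/-- Measurable selection of minimizers: if `Ξ` is a Polish space,
`C` a compact metric space, `J : Ξ × C → ℝ` is jointly lower semicontinuous and
continuous in the first variable, then there is a Borel measurable map
`cstar : Ξ → C` selecting, for each `ξ`, a minimizer of `J (ξ, ·)` over `C`
(i.e. `J (ξ, cstar ξ) = min_{c ∈ C} J (ξ, c)`, the minimum being attained). -/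
theorem measurable_argmin_selection
    {Ξ : Type*} [MetricSpace Ξ] [CompleteSpace Ξ] [TopologicalSpace.SeparableSpace Ξ]
    [MeasurableSpace Ξ] [BorelSpace Ξ]
    {C : Type*} [MetricSpace C] [CompactSpace C] [Nonempty C]
    [MeasurableSpace C] [BorelSpace C]
    (J : Ξ × C → ℝ)
    (hJ_lsc : LowerSemicontinuous J)
    (hJ_cont : ∀ c : C, Continuous fun ξ : Ξ => J (ξ, c)) :
    ∃ cstar : Ξ → C, Measurable cstar ∧
      ∀ ξ : Ξ, ∀ c : C, J (ξ, cstar ξ) ≤ J (ξ, c) := by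
  classical
  -- lower semicontinuity in the second variable
  have hlsc2 : ∀ ξ : Ξ, LowerSemicontinuous fun c : C => J (ξ, c) := by
    intro ξ c y hy
    exact ((continuous_const.prodMk continuous_id).tendsto c).eventually (hJ_lsc (ξ, c) y hy)
  -- existence of minimizers
  have hmin : ∀ ξ : Ξ, ∃ c : C, ∀ c' : C, J (ξ, c) ≤ J (ξ, c') := by
    intro ξ
    have hdir : Directed (· ⊇ ·) fun c' : C => {c : C | J (ξ, c) ≤ J (ξ, c')} := by
      intro a b
      rcases le_total (J (ξ, a)) (J (ξ, b)) with h | h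
      · exact ⟨a, subset_rfl, fun c hc => le_trans hc h⟩
      · exact ⟨b, fun c hc => le_trans hc h, subset_rfl⟩
    have hcl : ∀ c' : C, IsClosed {c : C | J (ξ, c) ≤ J (ξ, c')} := fun c' =>
      (hlsc2 ξ).isClosed_preimage _
    have hmem : ∀ c' : C, c' ∈ {c : C | J (ξ, c) ≤ J (ξ, c')} := fun c' => le_refl (J (ξ, c'))
    obtain ⟨c, hc⟩ := IsCompact.nonempty_iInter_of_directed_nonempty_isCompact_isClosed
      (fun c' : C => {c : C | J (ξ, c) ≤ J (ξ, c')}) hdir (fun c' => ⟨c', hmem c'⟩)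
      (fun c' => (hcl c').isCompact) hcl
    exact ⟨c, fun c' => by simpa using mem_iInter.1 hc c'⟩
  choose c0 hc0 using hmin
  -- the argmin multifunction
  set A : Ξ → Set C := fun ξ => {c : C | J (ξ, c) ≤ J (ξ, c0 ξ)} with hA
  have hAne : ∀ ξ, (A ξ).Nonempty := fun ξ => ⟨c0 ξ, by simp only [hA, mem_setOf_eq]; exact le_rfl⟩
  have hAcl : ∀ ξ, IsClosed (A ξ) := fun ξ => (hlsc2 ξ).isClosed_preimage _
  -- the key measurability: hitting sets of closed sets are closed
  have hkey : ∀ K : Set C, IsClosed K → MeasurableSet {ξ | (A ξ ∩ K).Nonempty} := by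
    intro K hK
    refine (IsSeqClosed.isClosed ?_).measurableSet
    intro u ξ hu hlim
    choose cs hcs using hu
    obtain ⟨c, hcK, φ, hφ, hφlim⟩ := (hK.isCompact).tendsto_subseq fun n => (hcs n).2
    refine ⟨c, ?_, hcK⟩
    simp only [hA, mem_setOf_eq]
    by_contra hcon
    push_neg at hcon
    obtain ⟨y, hy1, hy2⟩ := exists_between hcon
    have hten : Tendsto (fun n => (u (φ n), cs (φ n))) atTop (𝓝 (ξ, c)) :=
      ((hlim.comp hφ.tendsto_atTop).prodMk_nhds hφlim)
    have hev1 : ∀ᶠ n in atTop, y < J (u (φ n), cs (φ n)) :=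
      hten.eventually (hJ_lsc (ξ, c) y hy2)
    have hev2 : ∀ᶠ n in atTop, J (u (φ n), c0 ξ) < y := by
      have hten2 : Tendsto (fun n => J (u (φ n), c0 ξ)) atTop (𝓝 (J (ξ, c0 ξ))) :=
        ((hJ_cont (c0 ξ)).tendsto ξ).comp (hlim.comp hφ.tendsto_atTop)
      exact hten2.eventually_lt_const hy1
    obtain ⟨n, h1, h2⟩ := (hev1.and hev2).exists
    have h3 : J (u (φ n), cs (φ n)) ≤ J (u (φ n), c0 (u (φ n))) := by
      have := (hcs (φ n)).1
      simpa only [hA, mem_setOf_eq] using this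
    have h4 : J (u (φ n), c0 (u (φ n))) ≤ J (u (φ n), c0 ξ) := hc0 (u (φ n)) (c0 ξ)
    linarith
  obtain ⟨f, hfmeas, hfA⟩ := exists_measurable_selection_aux A hAne hAcl hkey
  refine ⟨f, hfmeas, fun ξ c => ?_⟩
  have := hfA ξ
  simp only [hA, mem_setOf_eq] at this
  exact le_trans this (hc0 ξ c)
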